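/- Simplified global a priori error bound for WST-LSPG (Corollary 4.7, exponential growth in the number of windows): retaining the indexed window-residual setup with trial subspaces and the WST-LSPG optimality property, assume additionally that the constants are window-independent, i.e. σA k = σA, σB k = σB, σAic k = σAic, σBic k = σBic for all k (so c₁ k = c₁ = σA - σB*Δt*κ and c₂ k = c₂ = σAic + Δt*κ*σBic), that σAic > 0, and that 2 * σAic ≥ σA. Then for every window index k, ‖ũ k - u k‖ ≤ ((k + 1) / c₁) * (2 * σAic / σA)^k * Real.exp ( k * (Δt * κ * (σBic / σAic + σB / σA)) / (1 - Δt * κ * σB / σA) ) * max_{i ∈ Finset.range (k+1)} ‖R i (û i) (û₀ i)‖. (The factor k+1 counts the k+1 summands of the global bound; the error bound grows exponentially in the number of windows, not in the number of time steps.) -/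

import Mathlib

set_option maxHeartbeats 1000000 in
/-- Simplified global a priori error bound for WST-LSPG (Corollary 4.7):
exponential growth in the number of windows. -/
theorem simplified_global_a_priori_error_bound
    (N : ℕ) (M : ℕ → ℕ)
    (A B : ∀ k : ℕ, EuclideanSpace ℝ (Fin (M k)) →L[ℝ] EuclideanSpace ℝ (Fin (M k)))
    (Aic Bic : ∀ k : ℕ, EuclideanSpace ℝ (Fin N) →L[ℝ] EuclideanSpace ℝ (Fin (M k)))
    (Δt : ℝ) (hΔt : 0 < Δt)
    (F : ∀ k : ℕ, EuclideanSpace ℝ (Fin (M k)) → EuclideanSpace ℝ (Fin (M k)))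
    (f₀ : ℕ → EuclideanSpace ℝ (Fin N) → EuclideanSpace ℝ (Fin N))
    (κ : ℝ) (hκ : 0 ≤ κ)
    (hF : ∀ k x y, ‖F k x - F k y‖ ≤ κ * ‖x - y‖)
    (hf₀ : ∀ k x y, ‖f₀ k x - f₀ k y‖ ≤ κ * ‖x - y‖)
    -- window-independent constants
    (σA σB σAic σBic : ℝ)
    (hσA : 0 < σA) (hA : ∀ k x, σA * ‖x‖ ≤ ‖A k x‖)
    (hσB : 0 ≤ σB) (hB : ∀ k x, ‖B k x‖ ≤ σB * ‖x‖)
    (hσAic : 0 < σAic) (hAic : ∀ k x, ‖Aic k x‖ ≤ σAic * ‖x‖)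
    (hσBic : 0 ≤ σBic) (hBic : ∀ k x, ‖Bic k x‖ ≤ σBic * ‖x‖)
    (hAicA : 2 * σAic ≥ σA)
    (R : ∀ k : ℕ, EuclideanSpace ℝ (Fin (M k)) → EuclideanSpace ℝ (Fin N) →
      EuclideanSpace ℝ (Fin (M k)))
    (hR : ∀ k w w₀, R k w w₀ =
      A k w - Δt • B k (F k w) + Aic k w₀ - Δt • Bic k (f₀ k w₀))
    (c₁ c₂ : ℝ)
    (hc₁ : c₁ = σA - σB * Δt * κ)
    (hc₂ : c₂ = σAic + Δt * κ * σBic)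
    (hc₁pos : 0 < c₁)
    (u : ∀ k : ℕ, EuclideanSpace ℝ (Fin (M k))) (u₀ : ℕ → EuclideanSpace ℝ (Fin N))
    (hFOM : ∀ k, R k (u k) (u₀ k) = 0)
    (uR : ∀ k : ℕ, EuclideanSpace ℝ (Fin (M k))) (uR₀ : ℕ → EuclideanSpace ℝ (Fin N))
    (hIC0 : uR₀ 0 = u₀ 0)
    (hIC : ∀ k, 1 ≤ k → ‖uR₀ k - u₀ k‖ ≤ ‖uR (k - 1) - u (k - 1)‖)
    (S : ∀ k : ℕ, Set (EuclideanSpace ℝ (Fin (M k))))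
    (W : ℕ → Submodule ℝ (EuclideanSpace ℝ (Fin N)))
    (huR₀W : ∀ k, uR₀ k ∈ W k)
    (uP : ∀ k : ℕ, EuclideanSpace ℝ (Fin (M k)))
    (huPS : ∀ k, uP k ∈ S k)
    (huPclosest : ∀ k, ∀ w ∈ S k, ‖u k - uP k‖ ≤ ‖u k - w‖)
    (uP₀ : ℕ → EuclideanSpace ℝ (Fin N))
    (huP₀ : ∀ k, uP₀ k = (Submodule.orthogonalProjectionOnto (W k) (u₀ k) : EuclideanSpace ℝ (Fin N)))
    (hopt : ∀ k, ∀ w ∈ S k, ‖R k (uR k) (uR₀ k)‖ ≤ ‖R k w (uR₀ k)‖)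
    (k : ℕ) :
    ‖uR k - u k‖ ≤ ((k + 1 : ℝ) / c₁) * (2 * σAic / σA) ^ k *
      Real.exp (k * (Δt * κ * (σBic / σAic + σB / σA)) / (1 - Δt * κ * σB / σA)) *
      (Finset.range (k + 1)).sup' Finset.nonempty_range_add_one
        (fun i => ‖R i (uP i) (uP₀ i)‖) := by

  have hσAne : (σA:ℝ) ≠ 0 := ne_of_gt hσA
  have hc₁ne : c₁ ≠ 0 := ne_of_gt hc₁pos
  have hc₂0 : 0 ≤ c₂ := by rw [hc₂]; positivity
  set x : ℝ := Δt * κ * (σBic / σAic + σB / σA) / (1 - Δt * κ * σB / σA) with hxdef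
  set G : ℝ := (2 * σAic / σA) * Real.exp x with hGdef
  have hden : 1 - Δt * κ * σB / σA = c₁ / σA := by
    rw [hc₁]; field_simp
  have hx0 : 0 ≤ x := by
    rw [hxdef, hden]
    positivity
  have hratio : 1 ≤ 2 * σAic / σA := (one_le_div hσA).mpr hAicA
  have hG1 : 1 ≤ G := by
    calc (1:ℝ) ≤ 2 * σAic / σA := hratio
      _ ≤ G := le_mul_of_one_le_right (by positivity) (Real.one_le_exp hx0)
  have hG0 : 0 < G := lt_of_lt_of_le one_pos hG1
  have hG2 : 2 * c₂ ≤ c₁ * G := by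
    have hxval : x = Δt * κ * (σBic / σAic + σB / σA) * σA / c₁ := by
      rw [hxdef, hden]
      field_simp
    have hne : σA - σB * Δt * κ ≠ 0 := by rw [← hc₁]; exact hc₁ne
    have heq : c₁ * ((2 * σAic / σA) * (1 + x)) = 2 * c₂ := by
      rw [hxval, hc₁, hc₂]
      field_simp [hne]
      ring
    have hexp : 1 + x ≤ Real.exp x := by linarith [Real.add_one_le_exp x]
    calc 2 * c₂ = c₁ * ((2 * σAic / σA) * (1 + x)) := heq.symm
      _ ≤ c₁ * ((2 * σAic / σA) * Real.exp x) := by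
          refine mul_le_mul_of_nonneg_left ?_ hc₁pos.le
          exact mul_le_mul_of_nonneg_left hexp (by positivity)
      _ = c₁ * G := by rw [hGdef]
  -- residual difference in the initial condition argument
  have ic_diff : ∀ k w a b, ‖R k w a - R k w b‖ ≤ c₂ * ‖a - b‖ := by
    intro k w a b
    have hdiff : R k w a - R k w b = Aic k (a - b) - Δt • Bic k (f₀ k a - f₀ k b) := by
      rw [hR, hR]
      simp only [map_sub, smul_sub]
      abel
    rw [hdiff]
    have h1 : ‖Aic k (a - b)‖ ≤ σAic * ‖a - b‖ := hAic k _
    have h2 : ‖Bic k (f₀ k a - f₀ k b)‖ ≤ σBic * (κ * ‖a - b‖) :=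
      le_trans (hBic k _) (mul_le_mul_of_nonneg_left (hf₀ k a b) hσBic)
    have h3 : ‖Δt • Bic k (f₀ k a - f₀ k b)‖ = Δt * ‖Bic k (f₀ k a - f₀ k b)‖ := by
      rw [norm_smul, Real.norm_of_nonneg hΔt.le]
    calc ‖Aic k (a - b) - Δt • Bic k (f₀ k a - f₀ k b)‖
        ≤ ‖Aic k (a - b)‖ + ‖Δt • Bic k (f₀ k a - f₀ k b)‖ := norm_sub_le _ _
      _ ≤ σAic * ‖a - b‖ + Δt * (σBic * (κ * ‖a - b‖)) := by
          rw [h3]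
          exact add_le_add h1 (mul_le_mul_of_nonneg_left h2 hΔt.le)
      _ = c₂ * ‖a - b‖ := by rw [hc₂]; ring
  -- coercivity in the space-time argument
  have coer : ∀ k w w₀, c₁ * ‖w - u k‖ ≤ ‖R k w w₀ - R k (u k) w₀‖ := by
    intro k w w₀
    have hdiff : R k w w₀ - R k (u k) w₀
        = A k (w - u k) - Δt • B k (F k w - F k (u k)) := by
      rw [hR, hR]
      simp only [map_sub, smul_sub]
      abel
    rw [hdiff]
    have h1 : σA * ‖w - u k‖ ≤ ‖A k (w - u k)‖ := hA k _
    have h2 : ‖Δt • B k (F k w - F k (u k))‖ ≤ Δt * (σB * (κ * ‖w - u k‖)) := by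
      rw [norm_smul, Real.norm_of_nonneg hΔt.le]
      refine mul_le_mul_of_nonneg_left ?_ hΔt.le
      exact le_trans (hB k _) (mul_le_mul_of_nonneg_left (hF k w (u k)) hσB)
    have h3 := norm_sub_norm_le (A k (w - u k)) (Δt • B k (F k w - F k (u k)))
    rw [hc₁]
    nlinarith [norm_nonneg (w - u k)]
  -- orthogonal projection contracts the initial-condition error
  have proj_le : ∀ k, ‖uR₀ k - uP₀ k‖ ≤ ‖uR₀ k - u₀ k‖ := by
    intro k
    have h1 : (Submodule.orthogonalProjectionOnto (W k) (uR₀ k) : EuclideanSpace ℝ (Fin N)) = uR₀ k :=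
      Submodule.starProjection_eq_self_iff.mpr (huR₀W k)
    have heq : uR₀ k - uP₀ k
        = (Submodule.orthogonalProjectionOnto (W k) (uR₀ k - u₀ k) : EuclideanSpace ℝ (Fin N)) := by
      rw [huP₀, map_sub]
      push_cast
      rw [h1]
    rw [heq]
    have hle := (Submodule.orthogonalProjectionOnto (W k)).le_opNorm (uR₀ k - u₀ k)
    have hn := Submodule.orthogonalProjectionOnto_norm_le (W k)
    have hcoe : ‖(Submodule.orthogonalProjectionOnto (W k) (uR₀ k - u₀ k) : EuclideanSpace ℝ (Fin N))‖
        = ‖Submodule.orthogonalProjectionOnto (W k) (uR₀ k - u₀ k)‖ := rfl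
    rw [hcoe]
    exact hle.trans (mul_le_of_le_one_left (norm_nonneg _) hn)
  -- key per-window estimate
  have key : ∀ k, c₁ * ‖uR k - u k‖
      ≤ ‖R k (uP k) (uP₀ k)‖ + 2 * c₂ * ‖uR₀ k - u₀ k‖ := by
    intro k
    have h1 := coer k (uR k) (uR₀ k)
    have h2 : ‖R k (uR k) (uR₀ k) - R k (u k) (uR₀ k)‖
        ≤ ‖R k (uR k) (uR₀ k)‖ + ‖R k (u k) (uR₀ k)‖ := norm_sub_le _ _
    have h3 : ‖R k (u k) (uR₀ k)‖ ≤ c₂ * ‖uR₀ k - u₀ k‖ := by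
      have h := ic_diff k (u k) (uR₀ k) (u₀ k)
      rwa [hFOM k, sub_zero] at h
    have htri : ‖R k (uP k) (uR₀ k)‖ ≤ ‖R k (uP k) (uP₀ k)‖
        + ‖R k (uP k) (uR₀ k) - R k (uP k) (uP₀ k)‖ := by
      have h := norm_add_le (R k (uP k) (uP₀ k))
        (R k (uP k) (uR₀ k) - R k (uP k) (uP₀ k))
      simpa using h
    have h4 : ‖R k (uR k) (uR₀ k)‖
        ≤ ‖R k (uP k) (uP₀ k)‖ + c₂ * ‖uR₀ k - uP₀ k‖ := by
      have ho := hopt k (uP k) (huPS k)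
      have hd := ic_diff k (uP k) (uR₀ k) (uP₀ k)
      linarith
    have h5 := mul_le_mul_of_nonneg_left (proj_le k) hc₂0
    linarith
  set r : ℕ → ℝ := fun i => ‖R i (uP i) (uP₀ i)‖ with hrdef
  have hM0 : ∀ n : ℕ, 0 ≤ (Finset.range (n+1)).sup' Finset.nonempty_range_add_one r :=
    fun n => le_trans (norm_nonneg _)
      (Finset.le_sup' r (Finset.mem_range.mpr (Nat.succ_pos n)))
  have hMmono : ∀ n : ℕ, (Finset.range (n+1)).sup' Finset.nonempty_range_add_one r
      ≤ (Finset.range (n+2)).sup' Finset.nonempty_range_add_one r := by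
    intro n
    apply Finset.sup'_le
    intro i hi
    exact Finset.le_sup' r
      (Finset.mem_range.mpr (lt_trans (Finset.mem_range.mp hi) (Nat.lt_succ_self _)))
  have main : ∀ k : ℕ, ‖uR k - u k‖
      ≤ ((k + 1 : ℝ) / c₁) * G ^ k *
        (Finset.range (k+1)).sup' Finset.nonempty_range_add_one r := by
    intro k
    induction k with
    | zero =>
      have hk := key 0
      rw [hIC0, sub_self, norm_zero, mul_zero, add_zero] at hk
      have hM : (Finset.range 1).sup' Finset.nonempty_range_add_one r = r 0 := by
        simp
      have hgoal : ((0:ℕ) + 1 : ℝ) / c₁ * G ^ 0 *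
          (Finset.range 1).sup' Finset.nonempty_range_add_one r = r 0 / c₁ := by
        rw [hM, pow_zero]
        push_cast
        ring
      rw [hgoal, le_div_iff₀ hc₁pos]
      linarith
    | succ n ih =>
      have hk := key (n+1)
      have hδ : ‖uR₀ (n+1) - u₀ (n+1)‖ ≤ ‖uR n - u n‖ := by
        have h := hIC (n+1) (Nat.le_add_left 1 n)
        simpa using h
      set Mn : ℝ := (Finset.range (n+1)).sup' Finset.nonempty_range_add_one r with hMn
      set Mn1 : ℝ := (Finset.range (n+2)).sup' Finset.nonempty_range_add_one r with hMn1
      have hBnonneg : 0 ≤ ((n + 1 : ℝ) / c₁) * G ^ n * Mn := by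
        have := hM0 n
        positivity
      have h1 : c₁ * ‖uR (n+1) - u (n+1)‖
          ≤ r (n+1) + 2 * c₂ * (((n + 1 : ℝ) / c₁) * G ^ n * Mn) := by
        have h := mul_le_mul_of_nonneg_left (le_trans hδ ih)
          (by positivity : (0:ℝ) ≤ 2 * c₂)
        push_cast at h ⊢
        linarith
      have h2 : 2 * c₂ * (((n + 1 : ℝ) / c₁) * G ^ n * Mn)
          ≤ c₁ * G * (((n + 1 : ℝ) / c₁) * G ^ n * Mn) :=
        mul_le_mul_of_nonneg_right hG2 hBnonneg
      have h3 : c₁ * G * (((n + 1 : ℝ) / c₁) * G ^ n * Mn)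
          = (n + 1 : ℝ) * G ^ (n+1) * Mn := by
        field_simp
        ring
      have h4 : (n + 1 : ℝ) * G ^ (n+1) * Mn ≤ (n + 1 : ℝ) * G ^ (n+1) * Mn1 := by
        refine mul_le_mul_of_nonneg_left (hMmono n) ?_
        positivity
      have h5 : r (n+1) ≤ Mn1 :=
        Finset.le_sup' r (Finset.mem_range.mpr (Nat.lt_succ_self _))
      have h6 : Mn1 ≤ G ^ (n+1) * Mn1 :=
        le_mul_of_one_le_left (hM0 (n+1)) (one_le_pow₀ hG1)
      have hfinal : c₁ * ‖uR (n+1) - u (n+1)‖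
          ≤ ((n:ℝ) + 1 + 1) * G ^ (n+1) * Mn1 := by
        have e1 : ((n:ℝ) + 1 + 1) * G ^ (n+1) * Mn1
            = G ^ (n+1) * Mn1 + (n + 1 : ℝ) * G ^ (n+1) * Mn1 := by ring
        rw [e1]
        linarith
      have hrw : ((↑(n+1) : ℝ) + 1) / c₁ * G ^ (n+1) * Mn1
          = (((n:ℝ) + 1 + 1) * G ^ (n+1) * Mn1) / c₁ := by
        push_cast
        ring
      rw [hrw, le_div_iff₀ hc₁pos]
      linarith
  have hmain := main k
  calc ‖uR k - u k‖
      ≤ ((k + 1 : ℝ) / c₁) * G ^ k *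
        (Finset.range (k+1)).sup' Finset.nonempty_range_add_one r := hmain
    _ = ((k + 1 : ℝ) / c₁) * (2 * σAic / σA) ^ k *
        Real.exp (k * (Δt * κ * (σBic / σAic + σB / σA)) / (1 - Δt * κ * σB / σA)) *
        (Finset.range (k + 1)).sup' Finset.nonempty_range_add_one r := by
      rw [hGdef, mul_pow, hxdef]
      rw [show (k:ℝ) * (Δt * κ * (σBic / σAic + σB / σA)) / (1 - Δt * κ * σB / σA)
        = (k:ℝ) * (Δt * κ * (σBic / σAic + σB / σA) / (1 - Δt * κ * σB / σA)) by ring]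
      rw [Real.exp_nat_mul]
      ring
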